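/- arXiv:0807.3612 — 2 statements merged into one kernel-verified Lean document; each statement's English description precedes it below -/
import Mathlib

section
/- Let the Borel measure μ admit λ ∈ (0, +∞) with ∫_{y∈ℝ} e^{λ|y|} dμ(y) < +∞, and let T ∈ (0, +∞). Suppose (u_n)_{n=0}^∞ ⊂ C¹([0, T], L^∞(ℝ)) is a sequence of solutions to equation (4.1) such that sup_{n∈ℕ} ‖u_n(0) − u_0(0)‖_{L^∞(ℝ)} ≤ 1 and lim_{n→∞} ‖u_n(0) − u_0(0)‖_{L^∞([−I,+I])} = 0 for every I ∈ (0, +∞). Then lim_{n→∞} sup_{t∈[0,T]} ‖u_n(t) − u_0(t)‖_{L^∞([−J,+J])} = 0 holds for every J ∈ (0, +∞). -/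
open MeasureTheory Filter Topology ENNReal

/-- The convolution `(μ*u)(x) = ∫ u(x-y) dμ(y)`. -/
noncomputable def mconv (μ : Measure ℝ) (u : ℝ → ℝ) : ℝ → ℝ :=
  fun x => ∫ y, u (x - y) ∂μ

/-- A monostable nonlinearity: Lipschitz continuous, `f 0 = f 1 = 0`, `f > 0` on `(0,1)`. -/
def MonostableF (f : ℝ → ℝ) : Prop :=
  (∃ K : NNReal, LipschitzWith K f) ∧ f 0 = 0 ∧ f 1 = 0 ∧
    ∀ u : ℝ, 0 < u → u < 1 → 0 < f u

/-- `U : I → L^∞(ℝ)` is a (continuously differentiable) solution of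
`u_t = μ*u - u + f(u)` on the time interval `I`. -/
def IsSolutionOn (μ : Measure ℝ) (f : ℝ → ℝ) (I : Set ℝ)
    (U : ℝ → Lp ℝ ⊤ (volume : Measure ℝ)) : Prop :=
  ∃ D : ℝ → Lp ℝ ⊤ (volume : Measure ℝ),
    ContinuousOn D I ∧
    (∀ t ∈ I, HasDerivWithinAt U (D t) I t) ∧
    (∀ t ∈ I, (D t : ℝ → ℝ) =ᵐ[volume]
      fun x => mconv μ (U t) x - (U t : ℝ → ℝ) x + f ((U t : ℝ → ℝ) x))

/-! ### Auxiliary material: the exponential weight -/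

noncomputable def phi (lam : ℝ) : ℝ → ℝ := fun x => Real.exp (-(lam * |x|))

lemma phi_pos (lam x : ℝ) : 0 < phi lam x := Real.exp_pos _

lemma phi_le_one {lam : ℝ} (hlam : 0 ≤ lam) (x : ℝ) : phi lam x ≤ 1 := by
  rw [phi, ← Real.exp_zero]
  exact Real.exp_le_exp.2 (by nlinarith [abs_nonneg x])

lemma phi_mul_exp (lam x : ℝ) : phi lam x * Real.exp (lam * |x|) = 1 := by
  rw [phi, ← Real.exp_add]; simp

lemma phi_le_exp_mul {lam : ℝ} (hlam : 0 ≤ lam) (x y : ℝ) :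
    phi lam x ≤ Real.exp (lam * |y|) * phi lam (x - y) := by
  rw [phi, phi, ← Real.exp_add, Real.exp_le_exp]
  have h2 : |x - y| - |x| ≤ |y| := by
    have := abs_sub_abs_le_abs_sub (x - y) x
    simpa [abs_sub_comm] using this
  nlinarith

lemma phi_continuous (lam : ℝ) : Continuous (phi lam) := by
  unfold phi; fun_prop

lemma phi_le_of_abs_ge {lam I x : ℝ} (hlam : 0 ≤ lam) (h : I ≤ |x|) :
    phi lam x ≤ Real.exp (-(lam * I)) := by
  rw [phi, Real.exp_le_exp]; nlinarith

/-! ### Multiplication by the weight as a continuous linear map on `L^∞` -/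

lemma ae_abs_le_norm (f : Lp ℝ ⊤ (volume : Measure ℝ)) :
    ∀ᵐ x ∂(volume : Measure ℝ), |f x| ≤ ‖f‖ := by
  filter_upwards [enorm_ae_le_eLpNormEssSup (⇑f) (volume : Measure ℝ)] with x hx
  have hne : eLpNorm (⇑f) ⊤ (volume : Measure ℝ) ≠ ⊤ := Lp.eLpNorm_ne_top f
  rw [Lp.norm_def, ← Real.norm_eq_abs]
  have := ENNReal.toReal_mono (by rwa [eLpNorm_exponent_top] at hne) hx
  simpa [eLpNorm_exponent_top] using this

lemma norm_le_of_ae_bound' {f : Lp ℝ ⊤ (volume : Measure ℝ)} {C : ℝ} (hC : 0 ≤ C)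
    (h : ∀ᵐ x ∂(volume : Measure ℝ), |f x| ≤ C) : ‖f‖ ≤ C := by
  rw [Lp.norm_def]
  refine ENNReal.toReal_le_of_le_ofReal hC ?_
  rw [eLpNorm_exponent_top]
  exact eLpNormEssSup_le_of_ae_bound (by simpa [Real.norm_eq_abs] using h)

lemma memLp_phi_mul (lam : ℝ) (f : Lp ℝ ⊤ (volume : Measure ℝ)) (hlam : 0 ≤ lam) :
    MemLp (fun x => phi lam x * f x) ⊤ (volume : Measure ℝ) := by
  refine MemLp.of_le (Lp.memLp f) ?_ ?_
  · exact ((phi_continuous lam).aestronglyMeasurable).mul (Lp.aestronglyMeasurable f)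
  · refine Filter.Eventually.of_forall fun x => ?_
    rw [Real.norm_eq_abs, Real.norm_eq_abs, abs_mul, abs_of_pos (phi_pos lam x)]
    nlinarith [phi_le_one hlam x, abs_nonneg (f x), (phi_pos lam x).le]

noncomputable def mulPhiL (lam : ℝ) (hlam : 0 ≤ lam) :
    Lp ℝ ⊤ (volume : Measure ℝ) →L[ℝ] Lp ℝ ⊤ (volume : Measure ℝ) :=
  LinearMap.mkContinuous
    { toFun := fun f => (memLp_phi_mul lam f hlam).toLp (fun x => phi lam x * f x)
      map_add' := by
        intro f g
        rw [← MemLp.toLp_add (memLp_phi_mul lam f hlam) (memLp_phi_mul lam g hlam)]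
        refine MemLp.toLp_congr _ _ ?_
        filter_upwards [Lp.coeFn_add f g] with x hx
        rw [hx, Pi.add_apply, mul_add, Pi.add_apply]
      map_smul' := by
        intro c f
        dsimp only [RingHom.id_apply]
        rw [← MemLp.toLp_const_smul c (memLp_phi_mul lam f hlam)]
        refine MemLp.toLp_congr _ _ ?_
        filter_upwards [Lp.coeFn_smul c f] with x hx
        simp [hx]; ring }
    1
    (by
      intro f
      simp only [LinearMap.coe_mk, AddHom.coe_mk, one_mul]
      refine norm_le_of_ae_bound' (norm_nonneg f) ?_
      filter_upwards [MemLp.coeFn_toLp (memLp_phi_mul lam f hlam), ae_abs_le_norm f]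
        with x hx hx2
      rw [hx, abs_mul, abs_of_pos (phi_pos lam x)]
      nlinarith [phi_le_one hlam x, abs_nonneg (f x), (phi_pos lam x).le])

lemma mulPhiL_coeFn {lam : ℝ} (hlam : 0 ≤ lam) (f : Lp ℝ ⊤ (volume : Measure ℝ)) :
    (mulPhiL lam hlam f : ℝ → ℝ) =ᵐ[volume] fun x => phi lam x * f x :=
  MemLp.coeFn_toLp (memLp_phi_mul lam f hlam)

lemma mulPhiL_ae_bound {lam : ℝ} (hlam : 0 ≤ lam) (f : Lp ℝ ⊤ (volume : Measure ℝ)) :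
    ∀ᵐ x ∂(volume : Measure ℝ), phi lam x * |f x| ≤ ‖mulPhiL lam hlam f‖ := by
  filter_upwards [mulPhiL_coeFn hlam f, ae_abs_le_norm (mulPhiL lam hlam f)] with x h1 h2
  rw [h1, abs_mul, abs_of_pos (phi_pos lam x)] at h2
  exact h2

/-! ### Fubini-type shifting lemma and convolution estimates -/

lemma ae_ae_sub (μ : Measure ℝ) [IsFiniteMeasure μ] {p : ℝ → Prop}
    (hp : ∀ᵐ z ∂(volume : Measure ℝ), p z) :
    ∀ᵐ x ∂(volume : Measure ℝ), ∀ᵐ y ∂μ, p (x - y) := by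
  have hnull : (volume : Measure ℝ) {z | ¬ p z} = 0 := hp
  obtain ⟨N, hsub, hNm, hN0⟩ := exists_measurable_superset_of_null hnull
  have hunc : Measurable (Function.uncurry fun x y => N.indicator (1 : ℝ → ℝ≥0∞) (x - y)) :=
    (measurable_one.indicator hNm).comp (measurable_fst.sub measurable_snd)
  have hin : ∀ x : ℝ, (∫⁻ y, N.indicator (1 : ℝ → ℝ≥0∞) (x - y) ∂μ) = μ {y | x - y ∈ N} := by
    intro x
    have : (fun y => N.indicator (1 : ℝ → ℝ≥0∞) (x - y))
        = {y | x - y ∈ N}.indicator (1 : ℝ → ℝ≥0∞) := by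
      funext y
      by_cases h : x - y ∈ N <;> simp [Set.indicator_apply, h]
    rw [this]
    exact lintegral_indicator_one (hNm.preimage (measurable_const.sub measurable_id))
  have hswap : (∫⁻ x, ∫⁻ y, N.indicator (1 : ℝ → ℝ≥0∞) (x - y) ∂μ ∂(volume : Measure ℝ)) = 0 := by
    rw [lintegral_lintegral_swap hunc.aemeasurable]
    have : ∀ y : ℝ, (∫⁻ x, N.indicator (1 : ℝ → ℝ≥0∞) (x - y) ∂(volume : Measure ℝ)) = 0 := by
      intro y
      have : (fun x => N.indicator (1 : ℝ → ℝ≥0∞) (x - y))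
          = {x | x - y ∈ N}.indicator (1 : ℝ → ℝ≥0∞) := by
        funext x
        by_cases h : x - y ∈ N <;> simp [Set.indicator_apply, h]
      rw [this]
      exact (lintegral_indicator_one (hNm.preimage (measurable_sub_const y))).trans
        (((measurePreserving_sub_right (volume : Measure ℝ) y).measure_preimage
          hNm.nullMeasurableSet).trans hN0)
    simp [this]
  have hmeas : Measurable fun x => ∫⁻ y, N.indicator (1 : ℝ → ℝ≥0∞) (x - y) ∂μ :=
    hunc.lintegral_prod_right'
  have hae : ∀ᵐ x ∂(volume : Measure ℝ),
      (∫⁻ y, N.indicator (1 : ℝ → ℝ≥0∞) (x - y) ∂μ) = 0 :=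
    (lintegral_eq_zero_iff hmeas).mp hswap
  filter_upwards [hae] with x hx
  rw [hin x] at hx
  have : ∀ᵐ y ∂μ, x - y ∉ N := by
    rw [MeasureTheory.ae_iff]
    simpa using hx
  filter_upwards [this] with y hy
  by_contra hcon
  exact hy (hsub hcon)

section conv
variable (μ : Measure ℝ) [IsFiniteMeasure μ]

lemma integrable_shift (w : Lp ℝ ⊤ (volume : Measure ℝ)) :
    ∀ᵐ x ∂(volume : Measure ℝ), Integrable (fun y => w (x - y)) μ := by
  filter_upwards [ae_ae_sub μ (ae_abs_le_norm w)] with x hx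
  refine Integrable.mono' (integrable_const ‖w‖) ?_ ?_
  · exact ((Lp.stronglyMeasurable w).comp_measurable
      (measurable_const.sub measurable_id)).aestronglyMeasurable
  · filter_upwards [hx] with y hy
    simpa [Real.norm_eq_abs] using hy

lemma mconv_sub (a b : Lp ℝ ⊤ (volume : Measure ℝ)) :
    ∀ᵐ x ∂(volume : Measure ℝ),
      mconv μ (⇑(a - b)) x = mconv μ (⇑a) x - mconv μ (⇑b) x := by
  filter_upwards [integrable_shift μ a, integrable_shift μ b,
    ae_ae_sub μ (Lp.coeFn_sub a b)] with x ha hb hab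
  have : mconv μ (⇑(a - b)) x = ∫ y, (a (x - y) - b (x - y)) ∂μ := by
    refine integral_congr_ae ?_
    filter_upwards [hab] with y hy
    simpa using hy
  rw [this]
  exact integral_sub ha hb

variable {lam : ℝ} (hlam : 0 < lam)
  (hint : Integrable (fun y : ℝ => Real.exp (lam * |y|)) μ)

include hlam hint in
lemma conv_bound (w : Lp ℝ ⊤ (volume : Measure ℝ)) {M : ℝ}
    (hMb : ∀ᵐ z ∂(volume : Measure ℝ), phi lam z * |w z| ≤ M) :
    ∀ᵐ x ∂(volume : Measure ℝ),
      phi lam x * |mconv μ (⇑w) x| ≤ (∫ y, Real.exp (lam * |y|) ∂μ) * M := by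
  filter_upwards [integrable_shift μ w, ae_ae_sub μ hMb] with x hi hx
  have h1 : phi lam x * |mconv μ (⇑w) x| ≤ phi lam x * ∫ y, |w (x - y)| ∂μ := by
    have := norm_integral_le_integral_norm (μ := μ) (f := fun y => w (x - y))
    simp only [Real.norm_eq_abs] at this
    exact mul_le_mul_of_nonneg_left this (phi_pos lam x).le
  have h2 : phi lam x * ∫ y, |w (x - y)| ∂μ = ∫ y, phi lam x * |w (x - y)| ∂μ :=
    (integral_const_mul _ _).symm
  have h3 : (∫ y, phi lam x * |w (x - y)| ∂μ) ≤ ∫ y, Real.exp (lam * |y|) * M ∂μ := by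
    refine integral_mono_ae (hi.abs.const_mul _) (hint.mul_const M) ?_
    filter_upwards [hx] with y hy
    calc phi lam x * |w (x - y)|
        ≤ (Real.exp (lam * |y|) * phi lam (x - y)) * |w (x - y)| :=
          mul_le_mul_of_nonneg_right (phi_le_exp_mul hlam.le x y) (abs_nonneg _)
      _ = Real.exp (lam * |y|) * (phi lam (x - y) * |w (x - y)|) := by ring
      _ ≤ Real.exp (lam * |y|) * M :=
          mul_le_mul_of_nonneg_left hy (Real.exp_pos _).le
  have h4 : (∫ y, Real.exp (lam * |y|) * M ∂μ) = (∫ y, Real.exp (lam * |y|) ∂μ) * M :=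
    integral_mul_const _ _
  linarith [h1, h2 ▸ h3, h4]

end conv

/-- Proposition 19 (continuous dependence, locally uniformly in space). -/
theorem proposition19 (μ : Measure ℝ) (hμ : μ Set.univ = 1)
    (f : ℝ → ℝ) (hf : MonostableF f)
    (lam : ℝ) (hlam : 0 < lam)
    (hint : Integrable (fun y : ℝ => Real.exp (lam * |y|)) μ)
    (T : ℝ) (hT : 0 < T)
    (u : ℕ → ℝ → Lp ℝ ⊤ (volume : Measure ℝ))
    (hsol : ∀ n : ℕ, IsSolutionOn μ f (Set.Icc 0 T) (u n))
    (hbd : ∀ n : ℕ, ‖u n 0 - u 0 0‖ ≤ 1)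
    (hconv : ∀ I : ℝ, 0 < I →
      Tendsto (fun n : ℕ =>
          eLpNorm (fun x => (u n 0 : ℝ → ℝ) x - (u 0 0 : ℝ → ℝ) x) ⊤
            (volume.restrict (Set.Icc (-I) I))) atTop (𝓝 0)) :
    ∀ J : ℝ, 0 < J →
      Tendsto (fun n : ℕ =>
          ⨆ t ∈ Set.Icc (0 : ℝ) T,
            eLpNorm (fun x => (u n t : ℝ → ℝ) x - (u 0 t : ℝ → ℝ) x) ⊤
              (volume.restrict (Set.Icc (-J) J))) atTop (𝓝 0) := by
  intro J hJ
  haveI : IsFiniteMeasure μ := ⟨by rw [hμ]; exact ENNReal.one_lt_top⟩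
  obtain ⟨K, hK⟩ := hf.1
  set C0 : ℝ := ∫ y, Real.exp (lam * |y|) ∂μ with hC0def
  have hC0nn : 0 ≤ C0 := integral_nonneg fun y => (Real.exp_pos _).le
  set C : ℝ := C0 + 1 + (K : ℝ) with hCdef
  have hCnn : 0 ≤ C := by positivity
  set L := mulPhiL lam hlam.le with hLdef
  simp only [IsSolutionOn] at hsol
  choose D hDcont hDder hDrep using hsol
  -- Step 1: the derivative bound
  have key : ∀ n : ℕ, ∀ t ∈ Set.Icc (0 : ℝ) T,
      ‖L (D n t - D 0 t)‖ ≤ C * ‖L (u n t - u 0 t)‖ := by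
    intro n t ht
    set M : ℝ := ‖L (u n t - u 0 t)‖ with hMdef
    have hMnn : 0 ≤ M := norm_nonneg _
    refine norm_le_of_ae_bound' (by positivity) ?_
    have hMb := mulPhiL_ae_bound hlam.le (u n t - u 0 t)
    filter_upwards [mulPhiL_coeFn hlam.le (D n t - D 0 t), Lp.coeFn_sub (D n t) (D 0 t),
      hDrep n t ht, hDrep 0 t ht, conv_bound μ hlam hint (u n t - u 0 t) hMb,
      mconv_sub μ (u n t) (u 0 t), hMb, Lp.coeFn_sub (u n t) (u 0 t)]
      with x h1 h2 h3 h4 h5 h6 h7 h8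
    rw [h1]
    rw [Pi.sub_apply] at h2
    rw [abs_mul, abs_of_pos (phi_pos lam x), h2, h3, h4]
    rw [h8] at h7
    rw [h6] at h5
    have hlip : |f ((u n t : ℝ → ℝ) x) - f ((u 0 t : ℝ → ℝ) x)|
        ≤ (K : ℝ) * |(u n t : ℝ → ℝ) x - (u 0 t : ℝ → ℝ) x| := by
      have := hK.dist_le_mul ((u n t : ℝ → ℝ) x) ((u 0 t : ℝ → ℝ) x)
      simpa [Real.dist_eq] using this
    set a1 : ℝ := mconv μ (⇑(u n t)) x
    set a0 : ℝ := mconv μ (⇑(u 0 t)) x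
    set b1 : ℝ := (u n t : ℝ → ℝ) x
    set b0 : ℝ := (u 0 t : ℝ → ℝ) x
    have habs : |(a1 - b1 + f b1) - (a0 - b0 + f b0)|
        ≤ |a1 - a0| + |b1 - b0| + |f b1 - f b0| := by
      have : (a1 - b1 + f b1) - (a0 - b0 + f b0)
          = (a1 - a0) + (-(b1 - b0)) + (f b1 - f b0) := by ring
      rw [this]
      exact (abs_add_le _ _).trans (add_le_add
        ((abs_add_le _ _).trans (by rw [abs_neg])) le_rfl)
    have hphinn := (phi_pos lam x).le
    have e1 : phi lam x * |a1 - a0| ≤ C0 * M := h5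
    have e2 : phi lam x * |b1 - b0| ≤ M := h7
    have e3 : phi lam x * |f b1 - f b0| ≤ (K : ℝ) * M := by
      calc phi lam x * |f b1 - f b0| ≤ phi lam x * ((K : ℝ) * |b1 - b0|) :=
            mul_le_mul_of_nonneg_left hlip hphinn
        _ = (K : ℝ) * (phi lam x * |b1 - b0|) := by ring
        _ ≤ (K : ℝ) * M := mul_le_mul_of_nonneg_left e2 K.2
    calc phi lam x * |(a1 - b1 + f b1) - (a0 - b0 + f b0)|
        ≤ phi lam x * (|a1 - a0| + |b1 - b0| + |f b1 - f b0|) :=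
          mul_le_mul_of_nonneg_left habs hphinn
      _ = phi lam x * |a1 - a0| + phi lam x * |b1 - b0| + phi lam x * |f b1 - f b0| := by ring
      _ ≤ C0 * M + M + (K : ℝ) * M := by linarith
      _ = C * M := by rw [hCdef]; ring
  -- Step 2: Grönwall
  have gron : ∀ n : ℕ, ∀ t ∈ Set.Icc (0 : ℝ) T,
      ‖L (u n t - u 0 t)‖ ≤ ‖L (u n 0 - u 0 0)‖ * Real.exp (C * T) := by
    intro n
    have hcontu : ∀ m, ContinuousOn (u m) (Set.Icc (0 : ℝ) T) :=
      fun m t ht => (hDder m t ht).continuousWithinAt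
    have hFcont : ContinuousOn (fun t => L (u n t - u 0 t)) (Set.Icc (0 : ℝ) T) :=
      L.continuous.comp_continuousOn ((hcontu n).sub (hcontu 0))
    have hFder : ∀ t ∈ Set.Ico (0 : ℝ) T,
        HasDerivWithinAt (fun t => L (u n t - u 0 t)) (L (D n t - D 0 t)) (Set.Ici t) t := by
      intro t ht
      have h := (hDder n t (Set.Ico_subset_Icc_self ht)).sub
        (hDder 0 t (Set.Ico_subset_Icc_self ht))
      have h2 := L.hasFDerivAt.comp_hasDerivWithinAt t h
      exact h2.mono_of_mem_nhdsWithin (Icc_mem_nhdsGE_of_mem ht)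
    have hgron := norm_le_gronwallBound_of_norm_deriv_right_le (K := C) (ε := 0)
      (δ := ‖L (u n 0 - u 0 0)‖) hFcont hFder le_rfl
      (fun t ht => by rw [add_zero]; exact key n t (Set.Ico_subset_Icc_self ht))
    intro t ht
    have h := hgron t ht
    rw [gronwallBound_ε0, sub_zero] at h
    refine h.trans ?_
    exact mul_le_mul_of_nonneg_left
      (Real.exp_le_exp.2 (mul_le_mul_of_nonneg_left ht.2 hCnn)) (norm_nonneg _)
  -- Step 3: the initial bound
  have init : ∀ I : ℝ, 0 < I → ∀ n : ℕ,
      ‖L (u n 0 - u 0 0)‖ ≤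
        (eLpNorm (fun x => (u n 0 : ℝ → ℝ) x - (u 0 0 : ℝ → ℝ) x) ⊤
          (volume.restrict (Set.Icc (-I) I))).toReal + Real.exp (-(lam * I)) := by
    intro I hI n
    set g : ℝ → ℝ := fun x => (u n 0 : ℝ → ℝ) x - (u 0 0 : ℝ → ℝ) x with hgdef
    set b : ℝ := (eLpNorm g ⊤ (volume.restrict (Set.Icc (-I) I))).toReal with hbdef
    have hbnn : 0 ≤ b := ENNReal.toReal_nonneg
    refine norm_le_of_ae_bound' (by positivity) ?_
    have hfin : eLpNorm g ⊤ (volume.restrict (Set.Icc (-I) I)) ≠ ⊤ := by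
      have he : eLpNorm g ⊤ (volume.restrict (Set.Icc (-I) I))
          = eLpNorm (⇑(u n 0 - u 0 0)) ⊤ (volume.restrict (Set.Icc (-I) I)) :=
        eLpNorm_congr_ae (ae_restrict_of_ae ((Lp.coeFn_sub (u n 0) (u 0 0)).mono
          (fun x hx => by rw [hx, Pi.sub_apply])))
      rw [he]
      exact ((eLpNorm_mono_measure _ Measure.restrict_le_self).trans_lt
        (Lp.eLpNorm_lt_top (u n 0 - u 0 0))).ne
    have hres : ∀ᵐ x ∂(volume : Measure ℝ), x ∈ Set.Icc (-I) I → |g x| ≤ b := by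
      refine (ae_restrict_iff' measurableSet_Icc).mp ?_
      filter_upwards [enorm_ae_le_eLpNormEssSup g (volume.restrict (Set.Icc (-I) I))]
        with x hx
      have := ENNReal.toReal_mono (by rwa [eLpNorm_exponent_top] at hfin) hx
      rw [hbdef, eLpNorm_exponent_top, ← Real.norm_eq_abs]
      simpa using this
    filter_upwards [mulPhiL_coeFn hlam.le (u n 0 - u 0 0), Lp.coeFn_sub (u n 0) (u 0 0),
      ae_abs_le_norm (u n 0 - u 0 0), hres] with x h1 h2 h3 h4
    rw [h1, abs_mul, abs_of_pos (phi_pos lam x)]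
    have hw1 : |(u n 0 - u 0 0 : Lp ℝ ⊤ (volume : Measure ℝ)) x| ≤ 1 := h3.trans (hbd n)
    have habsnn : (0:ℝ) ≤ |(u n 0 - u 0 0 : Lp ℝ ⊤ (volume : Measure ℝ)) x| := abs_nonneg _
    by_cases hx : x ∈ Set.Icc (-I) I
    · have h5 : |(u n 0 - u 0 0 : Lp ℝ ⊤ (volume : Measure ℝ)) x| ≤ b := by
        rw [h2]; exact h4 hx
      nlinarith [phi_le_one hlam.le x, (phi_pos lam x).le, Real.exp_pos (-(lam * I))]
    · have hxI : I ≤ |x| := by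
        rcases not_and_or.mp ((Set.mem_Icc).not.mp hx) with h | h
        · push_neg at h
          calc I ≤ -x := by linarith
            _ ≤ |x| := neg_le_abs x
        · push_neg at h
          exact h.le.trans (le_abs_self x)
      have hphi : phi lam x ≤ Real.exp (-(lam * I)) := phi_le_of_abs_ge hlam.le hxI
      nlinarith [(phi_pos lam x).le]
  -- Step 4: the conclusion for a fixed time
  have final : ∀ n : ℕ, ∀ t ∈ Set.Icc (0 : ℝ) T,
      eLpNorm (fun x => (u n t : ℝ → ℝ) x - (u 0 t : ℝ → ℝ) x) ⊤
          (volume.restrict (Set.Icc (-J) J))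
        ≤ ENNReal.ofReal (Real.exp (lam * J) * ‖L (u n t - u 0 t)‖) := by
    intro n t ht
    rw [eLpNorm_exponent_top]
    refine eLpNormEssSup_le_of_ae_bound ?_
    refine (ae_restrict_iff' measurableSet_Icc).mpr ?_
    filter_upwards [mulPhiL_ae_bound hlam.le (u n t - u 0 t),
      Lp.coeFn_sub (u n t) (u 0 t)] with x h1 h2 hx
    rw [Real.norm_eq_abs]
    have hgx : (u n t : ℝ → ℝ) x - (u 0 t : ℝ → ℝ) x
        = ((u n t - u 0 t : Lp ℝ ⊤ (volume : Measure ℝ)) : ℝ → ℝ) x := by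
      rw [h2, Pi.sub_apply]
    rw [hgx]
    have hxabs : |x| ≤ J := abs_le.mpr ⟨hx.1, hx.2⟩
    have hexp : Real.exp (lam * |x|) ≤ Real.exp (lam * J) :=
      Real.exp_le_exp.2 (mul_le_mul_of_nonneg_left hxabs hlam.le)
    calc |((u n t - u 0 t : Lp ℝ ⊤ (volume : Measure ℝ)) : ℝ → ℝ) x|
        = (phi lam x * |((u n t - u 0 t : Lp ℝ ⊤ (volume : Measure ℝ)) : ℝ → ℝ) x|)
            * Real.exp (lam * |x|) := by
          rw [mul_comm (phi lam x), mul_assoc, phi_mul_exp, mul_one]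
      _ ≤ ‖L (u n t - u 0 t)‖ * Real.exp (lam * J) := by
          refine mul_le_mul h1 hexp (Real.exp_pos _).le (norm_nonneg _)
      _ = Real.exp (lam * J) * ‖L (u n t - u 0 t)‖ := by ring
  -- Step 5: combine into a uniform bound
  set A : ℝ := Real.exp (lam * J) * Real.exp (C * T) with hAdef
  have hApos : 0 < A := by positivity
  have total : ∀ I : ℝ, 0 < I → ∀ n : ℕ,
      (⨆ t ∈ Set.Icc (0 : ℝ) T,
        eLpNorm (fun x => (u n t : ℝ → ℝ) x - (u 0 t : ℝ → ℝ) x) ⊤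
          (volume.restrict (Set.Icc (-J) J)))
      ≤ ENNReal.ofReal (A *
          ((eLpNorm (fun x => (u n 0 : ℝ → ℝ) x - (u 0 0 : ℝ → ℝ) x) ⊤
            (volume.restrict (Set.Icc (-I) I))).toReal + Real.exp (-(lam * I)))) := by
    intro I hI n
    refine iSup₂_le fun t ht => (final n t ht).trans (ENNReal.ofReal_le_ofReal ?_)
    have h1 := gron n t ht
    have h2 := init I hI n
    have h3 : (0:ℝ) ≤ Real.exp (lam * J) := (Real.exp_pos _).le
    have h4 : (0:ℝ) ≤ Real.exp (C * T) := (Real.exp_pos _).le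
    have h5 : (0:ℝ) ≤ ‖L (u n 0 - u 0 0)‖ := norm_nonneg _
    rw [hAdef]
    nlinarith [norm_nonneg (L (u n t - u 0 t))]
  -- Step 6: the limit
  rw [ENNReal.tendsto_atTop_zero]
  intro ε hε
  by_cases hεtop : ε = ⊤
  · exact ⟨0, fun n _ => by rw [hεtop]; exact le_top⟩
  have hεr : 0 < ε.toReal := ENNReal.toReal_pos hε.ne' hεtop
  set δ : ℝ := ε.toReal / (2 * A) with hδdef
  have hδ : 0 < δ := by positivity
  set I : ℝ := max 1 (-Real.log δ / lam + 1) with hIdef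
  have hI : 0 < I := lt_of_lt_of_le one_pos (le_max_left _ _)
  have hIe : Real.exp (-(lam * I)) ≤ δ := by
    have h1 : -Real.log δ / lam ≤ I := by
      calc -Real.log δ / lam ≤ -Real.log δ / lam + 1 := by linarith
        _ ≤ I := le_max_right _ _
    have h2 : -Real.log δ ≤ lam * I := by
      rw [div_le_iff₀ hlam] at h1
      linarith [h1]
    calc Real.exp (-(lam * I)) ≤ Real.exp (Real.log δ) :=
          Real.exp_le_exp.2 (by linarith)
      _ = δ := Real.exp_log hδ
  obtain ⟨N, hN⟩ := ENNReal.tendsto_atTop_zero.mp (hconv I hI) (ENNReal.ofReal δ)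
    (ENNReal.ofReal_pos.mpr hδ)
  refine ⟨N, fun n hn => ?_⟩
  have hb : (eLpNorm (fun x => (u n 0 : ℝ → ℝ) x - (u 0 0 : ℝ → ℝ) x) ⊤
      (volume.restrict (Set.Icc (-I) I))).toReal ≤ δ := by
    have := hN n hn
    calc (eLpNorm (fun x => (u n 0 : ℝ → ℝ) x - (u 0 0 : ℝ → ℝ) x) ⊤
        (volume.restrict (Set.Icc (-I) I))).toReal
        ≤ (ENNReal.ofReal δ).toReal := ENNReal.toReal_mono ENNReal.ofReal_ne_top this
      _ = δ := ENNReal.toReal_ofReal hδ.le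
  refine (total I hI n).trans ?_
  have hle : A * ((eLpNorm (fun x => (u n 0 : ℝ → ℝ) x - (u 0 0 : ℝ → ℝ) x) ⊤
      (volume.restrict (Set.Icc (-I) I))).toReal + Real.exp (-(lam * I))) ≤ ε.toReal := by
    have : A * (δ + δ) = ε.toReal := by
      rw [hδdef]; field_simp; ring
    nlinarith [ENNReal.toReal_nonneg (a := eLpNorm (fun x => (u n 0 : ℝ → ℝ) x
      - (u 0 0 : ℝ → ℝ) x) ⊤ (volume.restrict (Set.Icc (-I) I))), Real.exp_pos (-(lam * I))]
  calc ENNReal.ofReal (A * ((eLpNorm (fun x => (u n 0 : ℝ → ℝ) x - (u 0 0 : ℝ → ℝ) x) ⊤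
        (volume.restrict (Set.Icc (-I) I))).toReal + Real.exp (-(lam * I))))
      ≤ ENNReal.ofReal ε.toReal := ENNReal.ofReal_le_ofReal hle
    _ = ε := ENNReal.ofReal_toReal hεtop
end

section
/- Let the nonlinearity f be continuously differentiable with f'(α) > 1 for some α ∈ [0,1]. Let ψ ∈ ℳ satisfy lim_{x→−∞} ψ(x) = 0 and lim_{x→+∞} ψ(x) = 1, and suppose that u(t,x) := ψ(x) is a standing wave solution to equation (4.1), i.e. (μ*ψ)(x) − ψ(x) + f(ψ(x)) = 0 for all x ∈ ℝ. Then ψ is a discontinuous function. -/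
open MeasureTheory Filter Topology

/-- `ℳ`: monotone nondecreasing, left continuous functions with values in `[0,1]`. -/
def IsM (u : ℝ → ℝ) : Prop :=
  Monotone u ∧ (∀ x : ℝ, ContinuousWithinAt u (Set.Iic x) x) ∧
    ∀ x : ℝ, u x ∈ Set.Icc (0 : ℝ) 1

theorem proposition17_aux (μ : Measure ℝ) (hμ : μ Set.univ = 1)
    (f : ℝ → ℝ) (hf : MonostableF f) (hf1 : ContDiff ℝ 1 f)
    (α : ℝ) (hα : α ∈ Set.Icc (0 : ℝ) 1) (hα' : 1 < deriv f α)
    (ψ : ℝ → ℝ)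
    (hmono : Monotone ψ) (hrange : ∀ x : ℝ, ψ x ∈ Set.Icc (0:ℝ) 1)
    (h0 : Tendsto ψ atBot (𝓝 0)) (h1 : Tendsto ψ atTop (𝓝 1))
    (hstand : ∀ x : ℝ, mconv μ ψ x - ψ x + f (ψ x) = 0) :
    ¬ Continuous ψ := by
  intro hcont
  -- g = u - f u strictly decreasing near α
  set g : ℝ → ℝ := fun u => u - f u with hg
  have hfd : Differentiable ℝ f := hf1.differentiable one_ne_zero
  have hderivcont : Continuous (deriv f) := hf1.continuous_deriv le_rfl
  obtain ⟨δ, hδ, hball⟩ : ∃ δ > 0, Metric.ball α δ ⊆ {u | 1 < deriv f u} := by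
    have : IsOpen {u : ℝ | 1 < deriv f u} := isOpen_lt continuous_const hderivcont
    exact Metric.isOpen_iff.mp this α hα'
  have hganti : StrictAntiOn g (Set.Ioo (α - δ) (α + δ)) := by
    apply strictAntiOn_of_deriv_neg (convex_Ioo _ _)
      ((continuous_id.sub hfd.continuous : Continuous g).continuousOn)
    intro x hx
    rw [interior_Ioo] at hx
    have hx' : x ∈ Metric.ball α δ := by
      rw [Metric.mem_ball, Real.dist_eq, abs_lt]
      constructor <;> [linarith [hx.1]; linarith [hx.2]]
    have h1f : 1 < deriv f x := hball hx'
    show deriv (fun x => id x - f x) x < 0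
    rw [deriv_fun_sub differentiableAt_id (hfd x), deriv_id]
    linarith
  -- pick u1 < u2 in (0,1) ∩ (α-δ, α+δ)
  set a : ℝ := max 0 (α - δ) with ha
  set b : ℝ := min 1 (α + δ) with hb
  have hab : a < b := by
    rcases hα with ⟨hα0, hα1⟩
    apply max_lt <;> apply lt_min <;> linarith
  set u₁ : ℝ := a + (b - a) / 3 with hu1
  set u₂ : ℝ := a + 2 * (b - a) / 3 with hu2
  have ha0 : (0:ℝ) ≤ a := le_max_left _ _
  have haα : α - δ ≤ a := le_max_right _ _
  have hb1 : b ≤ 1 := min_le_left _ _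
  have hbα : b ≤ α + δ := min_le_right _ _
  have hu₁mem : u₁ ∈ Set.Ioo (α - δ) (α + δ) := ⟨by simp only [hu1]; linarith, by simp only [hu1]; linarith⟩
  have hu₂mem : u₂ ∈ Set.Ioo (α - δ) (α + δ) := ⟨by simp only [hu2]; linarith, by simp only [hu2]; linarith⟩
  have hu12 : u₁ < u₂ := by simp only [hu1, hu2]; linarith
  have hu₁01 : u₁ ∈ Set.Ioo (0:ℝ) 1 := ⟨by simp only [hu1]; linarith, by simp only [hu1]; linarith⟩
  have hu₂01 : u₂ ∈ Set.Ioo (0:ℝ) 1 := ⟨by simp only [hu2]; linarith, by simp only [hu2]; linarith⟩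
  -- ψ attains values in (0,1)
  have attain : ∀ v : ℝ, v ∈ Set.Ioo (0:ℝ) 1 → ∃ x, ψ x = v := by
    intro v hv
    obtain ⟨xm, hxm⟩ := (h0.eventually_lt_const hv.1).exists
    obtain ⟨xp, hxp⟩ := (h1.eventually_const_lt hv.2).exists
    have hxmp : xm ≤ xp := by
      by_contra h
      exact absurd (hmono (le_of_not_ge h)) (by push_neg; linarith)
    have := intermediate_value_Icc hxmp hcont.continuousOn
      (Set.mem_Icc.mpr ⟨hxm.le, hxp.le⟩)
    obtain ⟨x, _, hx⟩ := this
    exact ⟨x, hx⟩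
  obtain ⟨x₁, hx₁⟩ := attain u₁ hu₁01
  obtain ⟨x₂, hx₂⟩ := attain u₂ hu₂01
  have hx12 : x₁ ≤ x₂ := by
    by_contra h
    have := hmono (le_of_not_ge h)
    rw [hx₁, hx₂] at this; linarith
  -- mconv is monotone
  haveI : IsFiniteMeasure μ := ⟨by simp [hμ]⟩
  have hmeas : Measurable ψ := hmono.measurable
  have hint : ∀ x : ℝ, Integrable (fun y => ψ (x - y)) μ := by
    intro x
    apply Integrable.mono' (integrable_const (1:ℝ))
    · exact (hmeas.comp (measurable_const.sub measurable_id)).aestronglyMeasurable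
    · filter_upwards with y
      rw [Real.norm_eq_abs, abs_le]
      exact ⟨by linarith [(hrange (x - y)).1], (hrange (x - y)).2⟩
  have hconvmono : mconv μ ψ x₁ ≤ mconv μ ψ x₂ := by
    apply integral_mono (hint x₁) (hint x₂)
    intro y
    exact hmono (by linarith)
  -- standing wave identity
  have key : ∀ x : ℝ, mconv μ ψ x = g (ψ x) := by
    intro x
    have := hstand x
    simp only [hg]; linarith
  rw [key x₁, key x₂, hx₁, hx₂] at hconvmono
  have := hganti hu₁mem hu₂mem hu12
  linarith

/-- Proposition 17: a monotone standing wave profile is discontinuous. -/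
theorem proposition17 (μ : Measure ℝ) (hμ : μ Set.univ = 1)
    (f : ℝ → ℝ) (hf : MonostableF f) (hf1 : ContDiff ℝ 1 f)
    (α : ℝ) (hα : α ∈ Set.Icc (0 : ℝ) 1) (hα' : 1 < deriv f α)
    (ψ : ℝ → ℝ) (hψ : IsM ψ)
    (h0 : Tendsto ψ atBot (𝓝 0)) (h1 : Tendsto ψ atTop (𝓝 1))
    (hstand : ∀ x : ℝ, mconv μ ψ x - ψ x + f (ψ x) = 0) :
    ¬ Continuous ψ :=
  proposition17_aux μ hμ f hf hf1 α hα hα' ψ hψ.1 hψ.2.2 h0 h1 hstand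
end
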